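/- Let G = (V, E) be a graph with a linear order < on E, F = (V, A_f) a spanning forest of G, and f ∈ E \ A_f an externally active edge of F. Then for every A_i ⊆ E_i(F) and A_e ⊆ E_e(F), the graphs (V, (A_f \ A_i) ∪ A_e) and (V, (A_f \ A_i) ∪ A_e ∪ {f}) have the same number of connected components; i.e., adding externally active edges never changes the component structure of any set obtained from F by deleting internally active edges. -/

import Mathlib

open Finset

attribute [local instance] Classical.propDecidable

/-- A multigraph on vertex type `V` with edge index type `E` is given by a map
`ends : E → Sym2 V` (loops and parallel edges are allowed).  For an edge subset
`A ⊆ E`, `edgeGraph ends A` is the simple graph on `V` whose adjacency is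
witnessed by some edge of `A`; it determines the connected components of the
spanning subgraph `(V, A)`. -/
def edgeGraph {V E : Type} (ends : E → Sym2 V) (A : Finset E) : SimpleGraph V where
  Adj a b := a ≠ b ∧ ∃ e ∈ A, ends e = s(a, b)
  symm := by
    refine ⟨?_⟩
    rintro a b ⟨hab, e, he, hs⟩
    exact ⟨Ne.symm hab, e, he, by rw [hs, Sym2.eq_swap]⟩
  loopless := by refine ⟨?_⟩; rintro a ⟨h, -⟩; exact h rfl

/-- `kc ends A` is the number of connected components of the spanning subgraph `(V, A)`. -/
noncomputable def kc {V E : Type} (ends : E → Sym2 V) (A : Finset E) : ℕ :=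
  Nat.card (edgeGraph ends A).ConnectedComponent

/-- `(V, A)` is a spanning forest of `(V, E)`: it is a forest
(`|A| + k((V,A)) = |V|`, which rules out loops, parallel edges and cycles)
with as many connected components as the whole graph. -/
def IsSpanningForest {V E : Type} [Fintype V] [Fintype E] (ends : E → Sym2 V)
    (A : Finset E) : Prop :=
  A.card + kc ends A = Fintype.card V ∧ kc ends A = kc ends Finset.univ

/-- `F - e + f`. -/
def swapEdge {E : Type} [DecidableEq E] (A : Finset E) (e f : E) : Finset E :=
  insert f (A.erase e)

/-- `e` is internally active in the spanning forest `(V, A)`. -/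
def InternallyActive {V E : Type} [Fintype V] [Fintype E] [DecidableEq E] [LinearOrder E]
    (ends : E → Sym2 V) (A : Finset E) (e : E) : Prop :=
  e ∈ A ∧ ¬ ∃ f, f ∉ A ∧ e < f ∧ IsSpanningForest ends (swapEdge A e f)

/-- `f` is externally active in the spanning forest `(V, A)`. -/
def ExternallyActive {V E : Type} [Fintype V] [Fintype E] [DecidableEq E] [LinearOrder E]
    (ends : E → Sym2 V) (A : Finset E) (f : E) : Prop :=
  f ∉ A ∧ ¬ ∃ e, e ∈ A ∧ f < e ∧ IsSpanningForest ends (swapEdge A e f)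

/-- The set `E_i(F)` of internally active edges of the spanning forest `F = (V, A)`. -/
noncomputable def intAct {V E : Type} [Fintype V] [Fintype E] [DecidableEq E] [LinearOrder E]
    (ends : E → Sym2 V) (A : Finset E) : Finset E :=
  Finset.univ.filter (InternallyActive ends A)

/-- The set `E_e(F)` of externally active edges of the spanning forest `F = (V, A)`. -/
noncomputable def extAct {V E : Type} [Fintype V] [Fintype E] [DecidableEq E] [LinearOrder E]
    (ends : E → Sym2 V) (A : Finset E) : Finset E :=
  Finset.univ.filter (ExternallyActive ends A)

/-! ### Auxiliary lemmas -/

section Aux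

variable {V E : Type} (ends : E → Sym2 V)

lemma sym2_exists (s : Sym2 V) : ∃ u v : V, s = s(u, v) :=
  Sym2.ind (fun u v => ⟨u, v, rfl⟩) s

lemma edgeGraph_mono {A B : Finset E} (h : A ⊆ B) : edgeGraph ends A ≤ edgeGraph ends B := by
  intro a b hab
  obtain ⟨hne, e, he, hs⟩ := hab
  exact ⟨hne, e, h he, hs⟩

lemma reach_mono {A B : Finset E} (h : A ⊆ B) {x y : V}
    (hr : (edgeGraph ends A).Reachable x y) : (edgeGraph ends B).Reachable x y :=
  hr.mono (edgeGraph_mono ends h)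

lemma reach_of_adj {A B : Finset E}
    (h : ∀ x y : V, (edgeGraph ends A).Adj x y → (edgeGraph ends B).Reachable x y)
    {x y : V} (hr : (edgeGraph ends A).Reachable x y) :
    (edgeGraph ends B).Reachable x y := by
  obtain ⟨w⟩ := hr
  induction w with
  | nil => exact SimpleGraph.Reachable.refl _
  | cons hadj p ih => exact (h _ _ hadj).trans ih

instance ccFinite [Fintype V] (G : SimpleGraph V) : Finite G.ConnectedComponent :=
  Finite.of_surjective G.connectedComponentMk (fun c => c.exists_rep)

/-- The map on connected components induced by a reachability-preserving inclusion. -/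
noncomputable def ccm [Fintype V] (A B : Finset E)
    (h : ∀ x y : V, (edgeGraph ends A).Adj x y → (edgeGraph ends B).Reachable x y) :
    (edgeGraph ends A).ConnectedComponent → (edgeGraph ends B).ConnectedComponent :=
  SimpleGraph.ConnectedComponent.lift (edgeGraph ends B).connectedComponentMk
    (fun _ _ p _ => SimpleGraph.ConnectedComponent.sound (reach_of_adj ends h ⟨p⟩))

@[simp] lemma ccm_mk [Fintype V] (A B : Finset E) (h) (v : V) :
    ccm ends A B h ((edgeGraph ends A).connectedComponentMk v)
      = (edgeGraph ends B).connectedComponentMk v := rfl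

lemma ccm_surj [Fintype V] (A B : Finset E) (h) :
    Function.Surjective (ccm ends A B h) := by
  intro c
  induction c using SimpleGraph.ConnectedComponent.ind with
  | _ v => exact ⟨(edgeGraph ends A).connectedComponentMk v, rfl⟩

lemma kc_le_of_reach [Fintype V] {A B : Finset E}
    (h : ∀ x y : V, (edgeGraph ends A).Adj x y → (edgeGraph ends B).Reachable x y) :
    kc ends B ≤ kc ends A :=
  Nat.card_le_card_of_surjective _ (ccm_surj ends A B h)

lemma kc_antitone [Fintype V] {A B : Finset E} (h : A ⊆ B) : kc ends B ≤ kc ends A :=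
  kc_le_of_reach ends (fun _ _ hadj => ((edgeGraph_mono ends h) hadj).reachable)

/-- Splitting a walk in `insert g A` at the edge `g`. -/
lemma walk_split [DecidableEq E] {A : Finset E} {g : E} {u v : V} (hg : ends g = s(u, v)) :
    ∀ {x y : V}, (edgeGraph ends (insert g A)).Walk x y →
      ¬ (edgeGraph ends A).Reachable x y →
      ((edgeGraph ends A).Reachable x u ∧ (edgeGraph ends A).Reachable v y) ∨
      ((edgeGraph ends A).Reachable x v ∧ (edgeGraph ends A).Reachable u y) := by
  intro x y w
  induction w with
  | nil => exact fun h => absurd (SimpleGraph.Reachable.refl _) h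
  | @cons x w' y hadj p ih =>
    intro hnr
    obtain ⟨hne, e, he, hse⟩ := hadj
    rcases Finset.mem_insert.mp he with rfl | heA
    · have hxw : s(u, v) = s(x, w') := hg.symm.trans hse
      rw [Sym2.eq_iff] at hxw
      by_cases hR : (edgeGraph ends A).Reachable w' y
      · rcases hxw with ⟨rfl, rfl⟩ | ⟨rfl, rfl⟩
        · exact Or.inl ⟨SimpleGraph.Reachable.refl _, hR⟩
        · exact Or.inr ⟨SimpleGraph.Reachable.refl _, hR⟩
      · rcases ih hR with ⟨h1, h2⟩ | ⟨h1, h2⟩ <;> rcases hxw with ⟨rfl, rfl⟩ | ⟨rfl, rfl⟩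
        · exact Or.inl ⟨SimpleGraph.Reachable.refl _, h2⟩
        · exact absurd h2 hnr
        · exact absurd h2 hnr
        · exact Or.inr ⟨SimpleGraph.Reachable.refl _, h2⟩
    · have hadjA : (edgeGraph ends A).Adj x w' := ⟨hne, e, heA, hse⟩
      by_cases hR : (edgeGraph ends A).Reachable w' y
      · exact absurd (hadjA.reachable.trans hR) hnr
      · rcases ih hR with ⟨h1, h2⟩ | ⟨h1, h2⟩
        · exact Or.inl ⟨hadjA.reachable.trans h1, h2⟩
        · exact Or.inr ⟨hadjA.reachable.trans h1, h2⟩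

lemma adj_insert_reach [DecidableEq E] {A : Finset E} {g : E} {u v : V} (hg : ends g = s(u, v))
    (hr : (edgeGraph ends A).Reachable u v) (x y : V)
    (hadj : (edgeGraph ends (insert g A)).Adj x y) : (edgeGraph ends A).Reachable x y := by
  obtain ⟨hne, e, he, hse⟩ := hadj
  rcases Finset.mem_insert.mp he with rfl | heA
  · have hxw : s(u, v) = s(x, y) := hg.symm.trans hse
    rw [Sym2.eq_iff] at hxw
    rcases hxw with ⟨rfl, rfl⟩ | ⟨rfl, rfl⟩
    · exact hr
    · exact hr.symm
  · exact SimpleGraph.Adj.reachable ⟨hne, e, heA, hse⟩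

/-- Adding an edge whose endpoints are already connected does not change `kc`. -/
lemma kc_insert_eq [Fintype V] [DecidableEq E] {A : Finset E} {g : E} {u v : V} (hg : ends g = s(u, v))
    (hr : (edgeGraph ends A).Reachable u v) : kc ends (insert g A) = kc ends A :=
  le_antisymm (kc_antitone ends (Finset.subset_insert g A))
    (kc_le_of_reach ends (adj_insert_reach ends hg hr))

/-- Conversely, if adding an edge does not change `kc`, its endpoints were connected. -/
lemma reach_of_kc_insert_eq [Fintype V] [DecidableEq E] {A : Finset E} {g : E} {u v : V}
    (hg : ends g = s(u, v)) (hk : kc ends (insert g A) = kc ends A) :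
    (edgeGraph ends A).Reachable u v := by
  by_cases huv : u = v
  · subst huv; exact SimpleGraph.Reachable.refl _
  · have hsub : ∀ x y : V, (edgeGraph ends A).Adj x y →
        (edgeGraph ends (insert g A)).Reachable x y :=
      fun _ _ hadj => ((edgeGraph_mono ends (Finset.subset_insert g A)) hadj).reachable
    have hbij : Function.Bijective (ccm ends A (insert g A) hsub) :=
      (Nat.bijective_iff_surjective_and_card _).mpr ⟨ccm_surj ends A (insert g A) hsub, hk.symm⟩
    have hadj : (edgeGraph ends (insert g A)).Adj u v :=
      ⟨huv, g, Finset.mem_insert_self g A, hg⟩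
    have : (edgeGraph ends A).connectedComponentMk u
        = (edgeGraph ends A).connectedComponentMk v := by
      apply hbij.injective
      simpa using SimpleGraph.ConnectedComponent.sound hadj.reachable
    exact (SimpleGraph.ConnectedComponent.eq).mp this

/-- Adding one edge decreases the number of components by at most one. -/
lemma kc_le_insert_add_one [Fintype V] [DecidableEq E] (A : Finset E) (g : E) :
    kc ends A ≤ kc ends (insert g A) + 1 := by
  obtain ⟨u, v, hg⟩ := sym2_exists (ends g)
  have hsub : ∀ x y : V, (edgeGraph ends A).Adj x y →
      (edgeGraph ends (insert g A)).Reachable x y :=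
    fun _ _ hadj => ((edgeGraph_mono ends (Finset.subset_insert g A)) hadj).reachable
  set mkA := (edgeGraph ends A).connectedComponentMk with hmkA
  let ψ : (edgeGraph ends A).ConnectedComponent →
      (edgeGraph ends (insert g A)).ConnectedComponent ⊕ Unit :=
    fun c => if c = mkA u then Sum.inr () else Sum.inl (ccm ends A (insert g A) hsub c)
  have hinj : Function.Injective ψ := by
    intro c d hcd
    simp only [ψ] at hcd
    by_cases hc : c = mkA u <;> by_cases hd : d = mkA u
    · exact hc.trans hd.symm
    · rw [if_pos hc, if_neg hd] at hcd; exact absurd hcd (by simp)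
    · rw [if_neg hc, if_pos hd] at hcd; exact absurd hcd (by simp)
    · rw [if_neg hc, if_neg hd] at hcd
      replace hcd := Sum.inl.inj hcd
      obtain ⟨x, rfl⟩ : ∃ x, mkA x = c := c.exists_rep
      obtain ⟨y, rfl⟩ : ∃ y, mkA y = d := d.exists_rep
      simp only [hmkA, ccm_mk] at hcd
      have hrxy : (edgeGraph ends (insert g A)).Reachable x y :=
        (SimpleGraph.ConnectedComponent.eq).mp hcd
      by_cases hAxy : (edgeGraph ends A).Reachable x y
      · exact SimpleGraph.ConnectedComponent.sound hAxy
      · obtain ⟨w⟩ := hrxy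
        rcases walk_split ends hg w hAxy with ⟨h1, h2⟩ | ⟨h1, h2⟩
        · exact absurd (SimpleGraph.ConnectedComponent.sound h1) hc
        · exact absurd (SimpleGraph.ConnectedComponent.sound h2.symm) hd
  calc kc ends A ≤ Nat.card ((edgeGraph ends (insert g A)).ConnectedComponent ⊕ Unit) :=
        Nat.card_le_card_of_injective ψ hinj
    _ = kc ends (insert g A) + 1 := by simp [Nat.card_sum, kc]

lemma reach_empty {x y : V} (hr : (edgeGraph ends (∅ : Finset E)).Reachable x y) : x = y := by
  obtain ⟨w⟩ := hr
  cases w with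
  | nil => rfl
  | cons hadj p =>
    obtain ⟨-, e, he, -⟩ := hadj
    exact absurd he (Finset.notMem_empty e)

lemma kc_empty [Fintype V] : kc ends (∅ : Finset E) = Fintype.card V := by
  rw [kc, ← Nat.card_eq_fintype_card]
  exact (Nat.card_eq_of_bijective (edgeGraph ends (∅ : Finset E)).connectedComponentMk
    ⟨fun x y h => reach_empty ends ((SimpleGraph.ConnectedComponent.eq).mp h),
     fun c => c.exists_rep⟩).symm

/-- `|V| ≤ |B| + k(B)` for every edge set `B`. -/
lemma card_kc_ge [Fintype V] [DecidableEq E] (B : Finset E) : Fintype.card V ≤ B.card + kc ends B := by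
  induction B using Finset.induction with
  | empty => simp [kc_empty]
  | @insert g s hgs ih =>
    have := kc_le_insert_add_one ends s g
    rw [Finset.card_insert_of_notMem hgs]
    omega

/-- In a forest, deleting an edge strictly increases the number of components. -/
lemma kc_erase_gt [Fintype V] [DecidableEq E] {A : Finset E} (hacyc : A.card + kc ends A = Fintype.card V)
    {e : E} (he : e ∈ A) : kc ends A < kc ends (A.erase e) := by
  have h1 := card_kc_ge ends (A.erase e)
  have h2 := Finset.card_erase_add_one he
  omega

end Aux

section Aux2

variable {V E : Type} (ends : E → Sym2 V)

/-- If `a, b` (the ends of `f`) are connected in `A` but not in `A.erase e`, then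
`A - e + f` is again a spanning forest. -/
lemma swap_forest [Fintype V] [Fintype E] [DecidableEq E] {A : Finset E} {f e : E} {a b : V}
    (hcard : A.card + kc ends A = Fintype.card V) (hkc : kc ends A = kc ends Finset.univ)
    (hfA : f ∉ A) (hf : ends f = s(a, b)) (heA : e ∈ A)
    (hab : (edgeGraph ends A).Reachable a b)
    (hnr : ¬ (edgeGraph ends (A.erase e)).Reachable a b) :
    IsSpanningForest ends (swapEdge A e f) := by
  have hane : a ≠ b := by rintro rfl; exact hnr (SimpleGraph.Reachable.refl _)
  have hcard' : (swapEdge A e f).card = A.card := by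
    rw [swapEdge, Finset.card_insert_of_notMem (fun h => hfA (Finset.mem_of_mem_erase h))]
    exact Finset.card_erase_add_one heA
  have hsub : A.erase e ⊆ swapEdge A e f := Finset.subset_insert _ _
  have hadjf : (edgeGraph ends (swapEdge A e f)).Adj a b :=
    ⟨hane, f, Finset.mem_insert_self _ _, hf⟩
  have hle : kc ends (swapEdge A e f) ≤ kc ends A := by
    apply kc_le_of_reach
    intro x y hadj
    obtain ⟨hne, e', he', hse⟩ := hadj
    by_cases he'e : e' = e
    · subst he'e
      have habi : (edgeGraph ends (insert e' (A.erase e'))).Reachable a b := by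
        rw [Finset.insert_erase heA]; exact hab
      obtain ⟨w⟩ := habi
      rcases walk_split ends hse w hnr with ⟨h1, h2⟩ | ⟨h1, h2⟩
      · exact ((reach_mono ends hsub h1).symm.trans hadjf.reachable).trans
          (reach_mono ends hsub h2).symm
      · exact (((reach_mono ends hsub h1).symm.trans hadjf.reachable).trans
          (reach_mono ends hsub h2).symm).symm
    · exact SimpleGraph.Adj.reachable
        ⟨hne, e', Finset.mem_insert_of_mem (Finset.mem_erase.mpr ⟨he'e, he'⟩), hse⟩
  have hge : kc ends Finset.univ ≤ kc ends (swapEdge A e f) :=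
    kc_antitone ends (Finset.subset_univ _)
  have heq : kc ends (swapEdge A e f) = kc ends A := le_antisymm hle (hkc ▸ hge)
  exact ⟨by rw [hcard', heq]; exact hcard, by rw [heq, hkc]⟩

/-- In a forest, if `x, y` stay connected after deleting `e` and after deleting `e'`,
they stay connected after deleting both. -/
lemma forest_two_erase [Fintype V] [DecidableEq E] {A : Finset E} {x y : V}
    (hacyc : A.card + kc ends A = Fintype.card V) {e e' : E}
    (h1 : (edgeGraph ends (A.erase e)).Reachable x y)
    (h2 : (edgeGraph ends (A.erase e')).Reachable x y) :
    (edgeGraph ends ((A.erase e).erase e')).Reachable x y := by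
  by_cases he' : e' ∈ A.erase e
  · by_contra hnr
    have he'A : e' ∈ A := Finset.mem_of_mem_erase he'
    obtain ⟨u, v, hg⟩ := sym2_exists (ends e')
    have h1' : (edgeGraph ends (insert e' ((A.erase e).erase e'))).Reachable x y := by
      rw [Finset.insert_erase he']; exact h1
    obtain ⟨w⟩ := h1'
    have hsub : (A.erase e).erase e' ⊆ A.erase e' := by
      intro z hz
      rw [Finset.mem_erase] at hz ⊢
      exact ⟨hz.1, Finset.mem_of_mem_erase hz.2⟩
    have huv : (edgeGraph ends (A.erase e')).Reachable u v := by
      rcases walk_split ends hg w hnr with ⟨hA, hB⟩ | ⟨hA, hB⟩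
      · exact ((reach_mono ends hsub hA).symm.trans h2).trans (reach_mono ends hsub hB).symm
      · exact (((reach_mono ends hsub hA).symm.trans h2).trans
          (reach_mono ends hsub hB).symm).symm
    have : kc ends (insert e' (A.erase e')) = kc ends (A.erase e') :=
      kc_insert_eq ends hg huv
    rw [Finset.insert_erase he'A] at this
    exact absurd this (by have := kc_erase_gt ends hacyc he'A; omega)
  · rw [Finset.erase_eq_of_notMem he']; exact h1

/-- Deleting any set of individually removable edges from a forest keeps `x, y` connected. -/
lemma forest_sdiff_reach [Fintype V] [DecidableEq E] {x y : V} (S : Finset E) :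
    ∀ (A : Finset E), A.card + kc ends A = Fintype.card V →
      (∀ e ∈ S, (edgeGraph ends (A.erase e)).Reachable x y) →
      (edgeGraph ends A).Reachable x y →
      (edgeGraph ends (A \ S)).Reachable x y := by
  induction S using Finset.induction with
  | empty => intro A _ _ hxy; rwa [Finset.sdiff_empty]
  | @insert g s hgs ih =>
    intro A hacyc hS hxy
    by_cases hgA : g ∈ A
    · have hkcA' : kc ends (A.erase g) = kc ends A + 1 := by
        have h1 := kc_erase_gt ends hacyc hgA
        have h2 := kc_le_insert_add_one ends (A.erase g) g
        rw [Finset.insert_erase hgA] at h2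
        omega
      have hacyc' : (A.erase g).card + kc ends (A.erase g) = Fintype.card V := by
        have := Finset.card_erase_add_one hgA
        omega
      have hg' : (edgeGraph ends (A.erase g)).Reachable x y :=
        hS g (Finset.mem_insert_self g s)
      have hS' : ∀ e ∈ s, (edgeGraph ends ((A.erase g).erase e)).Reachable x y := by
        intro e hes
        exact forest_two_erase ends hacyc hg' (hS e (Finset.mem_insert_of_mem hes))
      -- note: forest_two_erase gives reach in (A.erase e).erase g; need (A.erase g).erase e
      have hres := ih (A.erase g) hacyc' hS' hg'
      have : A \ insert g s = (A.erase g) \ s := by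
        rw [Finset.sdiff_insert, ← Finset.erase_sdiff_comm]
      rwa [this]
    · have : A \ insert g s = A \ s := by
        rw [Finset.sdiff_insert, Finset.erase_eq_of_notMem
          (fun h => hgA (Finset.mem_sdiff.mp h).1)]
      rw [this]
      exact ih A hacyc (fun e hes => hS e (Finset.mem_insert_of_mem hes)) hxy

end Aux2

/-- Adding an externally active edge `f` never changes the number
of connected components of any set `(A_f \ A_i) ∪ A_e` obtained from the spanning
forest by deleting internally active edges and adding externally active edges. -/
theorem external_edge_preserves_components {V E : Type} [Fintype V] [Fintype E]
    [DecidableEq E] [LinearOrder E] (ends : E → Sym2 V) (Af : Finset E)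
    (hF : IsSpanningForest ends Af) (f : E) (hf : ExternallyActive ends Af f)
    (Ai Ae : Finset E) (hi : Ai ⊆ intAct ends Af) (he : Ae ⊆ extAct ends Af) :
    kc ends ((Af \ Ai) ∪ Ae) = kc ends (insert f ((Af \ Ai) ∪ Ae)) := by
  obtain ⟨hcard, hkc⟩ := hF
  obtain ⟨hfA, hfx⟩ := hf
  obtain ⟨a, b, hfab⟩ := sym2_exists (ends f)
  -- Step 1: the ends of `f` are connected in `Af`
  have h1 : kc ends (insert f Af) = kc ends Af :=
    le_antisymm (kc_antitone ends (Finset.subset_insert f Af))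
      (hkc ▸ kc_antitone ends (Finset.subset_univ _))
  have hab : (edgeGraph ends Af).Reachable a b := reach_of_kc_insert_eq ends hfab h1
  -- Step 2, 3: every internally active edge can be deleted without disconnecting `a, b`
  have h3 : ∀ e ∈ Ai, (edgeGraph ends (Af.erase e)).Reachable a b := by
    intro e heI
    have hIA : InternallyActive ends Af e := (Finset.mem_filter.mp (hi heI)).2
    obtain ⟨heA, hIn⟩ := hIA
    by_contra hnr
    have hsw : IsSpanningForest ends (swapEdge Af e f) :=
      swap_forest ends hcard hkc hfA hfab heA hab hnr
    rcases lt_trichotomy e f with hlt | hEq | hgt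
    · exact hIn ⟨f, hfA, hlt, hsw⟩
    · exact hfA (hEq ▸ heA)
    · exact hfx ⟨e, heA, hgt, hsw⟩
  -- Step 4: `a, b` are connected in `Af \ Ai`
  have h4 : (edgeGraph ends (Af \ Ai)).Reachable a b :=
    forest_sdiff_reach ends Ai Af hcard h3 hab
  -- Step 5: conclude
  have h5 : (edgeGraph ends ((Af \ Ai) ∪ Ae)).Reachable a b :=
    reach_mono ends Finset.subset_union_left h4
  exact (kc_insert_eq ends hfab h5).symm
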